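/- Let N ≥ 1 and z, w ∈ ℂ. Then ∫ exp(−Tr(J Jᴴ)) · det(z·I_N − J) · det(conj(w)·I_N − Jᴴ) dJ = π^{N²} · N! · E_N(z·conj(w)), where the integral is over all N×N complex matrices J with respect to Lebesgue measure. In particular, dividing by the value at z = w = 0 (which is π^{N²}·N!), the normalized expectation of one pair of conjugate characteristic polynomials in the complex Ginibre ensemble (class A) equals E_N(z·conj(w)). -/

import Mathlib

open MeasureTheory Matrix Finset

/-- The truncated exponential `E_n(x) = ∑_{j=0}^n x^j/j!`. -/
noncomputable def truncExp (n : ℕ) (x : ℂ) : ℂ :=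
  ∑ j ∈ Finset.range (n + 1), x ^ j / (Nat.factorial j : ℂ)

section GinibreAux
open Real Filter Complex

lemma iC : Integrable (fun x : ℝ => x^2 * Real.exp (-x^2)) := by
  have := integrable_rpow_mul_exp_neg_mul_sq (b := 1) one_pos (s := 2) (by norm_num)
  simpa [Real.rpow_natCast] using this

lemma iA : Integrable (fun x : ℝ => Real.exp (-x^2)) := by
  simpa [neg_mul] using integrable_exp_neg_mul_sq (b := 1) one_pos

lemma iB : Integrable (fun x : ℝ => x * Real.exp (-x^2)) := by
  simpa [neg_mul] using integrable_mul_exp_neg_mul_sq (b := 1) one_pos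

lemma rA : ∫ x : ℝ, Real.exp (-x^2) = Real.sqrt π := by
  simpa [neg_mul] using integral_gaussian 1

lemma rB : ∫ x : ℝ, x * Real.exp (-x^2) = 0 := by
  have h := integral_neg_eq_self (fun x : ℝ => x * Real.exp (-x^2)) (volume : Measure ℝ)
  simp only [neg_sq, neg_mul] at h
  rw [integral_neg] at h
  linarith

lemma rC : ∫ x : ℝ, x^2 * Real.exp (-x^2) = Real.sqrt π / 2 := by
  have hf : ∀ x ∈ Set.Ici (0:ℝ), HasDerivAt (fun x : ℝ => -x/2 * Real.exp (-x^2))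
      (x^2 * Real.exp (-x^2) - 1/2 * Real.exp (-x^2)) x := by
    intro x _
    have h1 : HasDerivAt (fun x : ℝ => -x/2) (-1/2) x := by
      simpa using ((hasDerivAt_id x).neg.div_const 2)
    have h2 : HasDerivAt (fun x : ℝ => Real.exp (-x^2)) (Real.exp (-x^2) * (-(2*x))) x := by
      have : HasDerivAt (fun x : ℝ => -x^2) (-(2*x)) x := by
        exact (by simpa using (hasDerivAt_pow 2 x).neg : HasDerivAt (-fun x : ℝ => x^2) (-(2*x)) x)
      exact this.exp
    refine (h1.mul h2).congr_deriv ?_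
    ring
  have hint : IntegrableOn (fun x : ℝ => x^2 * Real.exp (-x^2) - 1/2 * Real.exp (-x^2)) (Set.Ioi 0) := by
    exact (iC.sub (iA.const_mul (1/2))).integrableOn
  have htend : Tendsto (fun x : ℝ => -x/2 * Real.exp (-x^2)) atTop (nhds 0) := by
    have h0 : Tendsto (fun x : ℝ => x * Real.exp (-x^2)) atTop (nhds 0) := by
      have hlo := rpow_mul_exp_neg_mul_sq_isLittleO_exp_neg (b := 1) one_pos (s := 1)
      simp only [Real.rpow_one, one_mul, neg_mul] at hlo
      have hexp : Tendsto (fun x : ℝ => Real.exp (-(1/2 * x))) atTop (nhds 0) :=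
        Real.tendsto_exp_atBot.comp (tendsto_neg_atTop_atBot.comp
          (Filter.Tendsto.const_mul_atTop (by norm_num : (0:ℝ) < 1/2) tendsto_id))
      exact hlo.isBigO.trans_tendsto hexp
    have h1 := h0.div_const (-2)
    rw [zero_div] at h1
    exact h1.congr (fun x => by ring)
  have key := integral_Ioi_of_hasDerivAt_of_tendsto' (a := 0)
      (fun x hx => hf x hx) hint htend
  have hg : ∫ x in Set.Ioi (0:ℝ), Real.exp (-x^2) = Real.sqrt π / 2 := by
    simpa [neg_mul] using integral_gaussian_Ioi 1
  have hIoi : ∫ x in Set.Ioi (0:ℝ), x^2 * Real.exp (-x^2) = Real.sqrt π / 4 := by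
    have hsplit := integral_sub (μ := volume.restrict (Set.Ioi (0:ℝ)))
      iC.integrableOn ((iA.const_mul (1/2)).integrableOn)
    rw [key] at hsplit
    have h2 : ∫ x in Set.Ioi (0:ℝ), 1/2 * Real.exp (-x^2) = Real.sqrt π / 4 := by
      rw [integral_const_mul, hg]; ring
    rw [h2] at hsplit
    have : (0:ℝ) - -0/2 * Real.exp (-0^2) = 0 := by norm_num
    rw [this] at hsplit
    linarith
  have habs := integral_comp_abs (f := fun x : ℝ => x^2 * Real.exp (-x^2))
  simp only [_root_.sq_abs] at habs
  rw [habs, hIoi]; ring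

-- placeholders from part 1

noncomputable def polyGauss (α β γ δ : ℂ) : ℂ → ℂ :=
  fun a => (Real.exp (-‖a‖^2) : ℂ) * (α + β * a + γ * (starRingEnd ℂ) a + δ * (a * (starRingEnd ℂ) a))

lemma polyGauss_comp (α β γ δ : ℂ) (p : ℝ × ℝ) :
    polyGauss α β γ δ (Complex.measurableEquivRealProd.symm p) =
      α * (((Real.exp (-p.1^2) : ℝ) : ℂ) * ((Real.exp (-p.2^2) : ℝ) : ℂ))
      + (β + γ) * (((p.1 * Real.exp (-p.1^2) : ℝ) : ℂ) * ((Real.exp (-p.2^2) : ℝ) : ℂ))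
      + (β - γ) * Complex.I * (((Real.exp (-p.1^2) : ℝ) : ℂ) * ((p.2 * Real.exp (-p.2^2) : ℝ) : ℂ))
      + δ * (((p.1^2 * Real.exp (-p.1^2) : ℝ) : ℂ) * ((Real.exp (-p.2^2) : ℝ) : ℂ))
      + δ * (((Real.exp (-p.1^2) : ℝ) : ℂ) * ((p.2^2 * Real.exp (-p.2^2) : ℝ) : ℂ)) := by
  obtain ⟨x, y⟩ := p
  simp only [Complex.measurableEquivRealProd_symm_apply, polyGauss]
  have hn : ‖Complex.mk x y‖^2 = x^2 + y^2 := by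
    simp [Complex.sq_norm, Complex.normSq_mk]
    ring
  rw [hn]
  have hc : (starRingEnd ℂ) (Complex.mk x y) = Complex.mk x (-y) := rfl
  have hmk : (Complex.mk x y : ℂ) = (x : ℂ) + (y:ℂ) * Complex.I := by
    simp [Complex.mk_eq_add_mul_I]
  have hmk' : (Complex.mk x (-y) : ℂ) = (x : ℂ) - (y:ℂ) * Complex.I := by
    simp [Complex.mk_eq_add_mul_I]; ring
  rw [hc, hmk, hmk']
  push_cast
  rw [show -((x:ℂ)^2 + (y:ℂ)^2) = -(x:ℂ)^2 + -(y:ℂ)^2 from by ring, Complex.exp_add]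
  ring_nf
  rw [Complex.I_sq]
  ring

lemma intPolyGauss (α β γ δ : ℂ) : Integrable (polyGauss α β γ δ) := by
  rw [← MeasurePreserving.integrable_comp_emb (Complex.volume_preserving_equiv_real_prod.symm)
    (MeasurableEquiv.measurableEmbedding _)]
  have : (polyGauss α β γ δ) ∘ (Complex.measurableEquivRealProd.symm) = fun p : ℝ × ℝ =>
      α * (((Real.exp (-p.1^2) : ℝ) : ℂ) * ((Real.exp (-p.2^2) : ℝ) : ℂ))
      + (β + γ) * (((p.1 * Real.exp (-p.1^2) : ℝ) : ℂ) * ((Real.exp (-p.2^2) : ℝ) : ℂ))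
      + (β - γ) * Complex.I * (((Real.exp (-p.1^2) : ℝ) : ℂ) * ((p.2 * Real.exp (-p.2^2) : ℝ) : ℂ))
      + δ * (((p.1^2 * Real.exp (-p.1^2) : ℝ) : ℂ) * ((Real.exp (-p.2^2) : ℝ) : ℂ))
      + δ * (((Real.exp (-p.1^2) : ℝ) : ℂ) * ((p.2^2 * Real.exp (-p.2^2) : ℝ) : ℂ)) :=
    funext (polyGauss_comp α β γ δ)
  rw [this]
  exact (((((iA.ofReal.mul_prod iA.ofReal).const_mul α).add
    ((iB.ofReal.mul_prod iA.ofReal).const_mul (β + γ))).add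
    ((iA.ofReal.mul_prod iB.ofReal).const_mul ((β - γ) * Complex.I))).add
    ((iC.ofReal.mul_prod iA.ofReal).const_mul δ)).add
    ((iA.ofReal.mul_prod iC.ofReal).const_mul δ)

lemma valPolyGauss (α β γ δ : ℂ) : ∫ a : ℂ, polyGauss α β γ δ a = (π : ℂ) * (α + δ) := by
  rw [← MeasurePreserving.integral_comp (Complex.volume_preserving_equiv_real_prod.symm)
    (MeasurableEquiv.measurableEmbedding _)]
  simp_rw [polyGauss_comp α β γ δ]
  rw [Measure.volume_eq_prod ℝ ℝ]
  have h1 := (iA.ofReal.mul_prod iA.ofReal).const_mul α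
  have h2 := (iB.ofReal.mul_prod iA.ofReal).const_mul (β + γ)
  have h3 := (iA.ofReal.mul_prod iB.ofReal).const_mul ((β - γ) * Complex.I)
  have h4 := (iC.ofReal.mul_prod iA.ofReal).const_mul δ
  have h5 := (iA.ofReal.mul_prod iC.ofReal).const_mul δ
  have h12 : Integrable (fun x : ℝ × ℝ => α * (((Real.exp (-x.1^2) : ℝ) : ℂ) * ((Real.exp (-x.2^2) : ℝ) : ℂ)) + (β + γ) * (((x.1 * Real.exp (-x.1^2) : ℝ) : ℂ) * ((Real.exp (-x.2^2) : ℝ) : ℂ))) (volume.prod volume) := h1.add h2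
  have h123 : Integrable (fun x : ℝ × ℝ => α * (((Real.exp (-x.1^2) : ℝ) : ℂ) * ((Real.exp (-x.2^2) : ℝ) : ℂ)) + (β + γ) * (((x.1 * Real.exp (-x.1^2) : ℝ) : ℂ) * ((Real.exp (-x.2^2) : ℝ) : ℂ)) + (β - γ) * Complex.I * (((Real.exp (-x.1^2) : ℝ) : ℂ) * ((x.2 * Real.exp (-x.2^2) : ℝ) : ℂ))) (volume.prod volume) := h12.add h3
  have h1234 : Integrable (fun x : ℝ × ℝ => α * (((Real.exp (-x.1^2) : ℝ) : ℂ) * ((Real.exp (-x.2^2) : ℝ) : ℂ)) + (β + γ) * (((x.1 * Real.exp (-x.1^2) : ℝ) : ℂ) * ((Real.exp (-x.2^2) : ℝ) : ℂ)) + (β - γ) * Complex.I * (((Real.exp (-x.1^2) : ℝ) : ℂ) * ((x.2 * Real.exp (-x.2^2) : ℝ) : ℂ)) + δ * (((x.1^2 * Real.exp (-x.1^2) : ℝ) : ℂ) * ((Real.exp (-x.2^2) : ℝ) : ℂ))) (volume.prod volume) := h123.add h4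
  have e5 : (∫ x : ℝ × ℝ, (α * (((Real.exp (-x.1^2) : ℝ) : ℂ) * ((Real.exp (-x.2^2) : ℝ) : ℂ)) + (β + γ) * (((x.1 * Real.exp (-x.1^2) : ℝ) : ℂ) * ((Real.exp (-x.2^2) : ℝ) : ℂ)) + (β - γ) * Complex.I * (((Real.exp (-x.1^2) : ℝ) : ℂ) * ((x.2 * Real.exp (-x.2^2) : ℝ) : ℂ)) + δ * (((x.1^2 * Real.exp (-x.1^2) : ℝ) : ℂ) * ((Real.exp (-x.2^2) : ℝ) : ℂ)) + δ * (((Real.exp (-x.1^2) : ℝ) : ℂ) * ((x.2^2 * Real.exp (-x.2^2) : ℝ) : ℂ))) ∂((volume : Measure ℝ).prod volume)) = (∫ x : ℝ × ℝ, (α * (((Real.exp (-x.1^2) : ℝ) : ℂ) * ((Real.exp (-x.2^2) : ℝ) : ℂ)) + (β + γ) * (((x.1 * Real.exp (-x.1^2) : ℝ) : ℂ) * ((Real.exp (-x.2^2) : ℝ) : ℂ)) + (β - γ) * Complex.I * (((Real.exp (-x.1^2) : ℝ) : ℂ) * ((x.2 * Real.exp (-x.2^2) : ℝ) : ℂ))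 + δ * (((x.1^2 * Real.exp (-x.1^2) : ℝ) : ℂ) * ((Real.exp (-x.2^2) : ℝ) : ℂ))) ∂((volume : Measure ℝ).prod volume)) + (∫ x : ℝ × ℝ, (δ * (((Real.exp (-x.1^2) : ℝ) : ℂ) * ((x.2^2 * Real.exp (-x.2^2) : ℝ) : ℂ))) ∂((volume : Measure ℝ).prod volume)) := integral_add h1234 h5
  have e4 : (∫ x : ℝ × ℝ, (α * (((Real.exp (-x.1^2) : ℝ) : ℂ) * ((Real.exp (-x.2^2) : ℝ) : ℂ)) + (β + γ) * (((x.1 * Real.exp (-x.1^2) : ℝ) : ℂ) * ((Real.exp (-x.2^2) : ℝ) : ℂ)) + (β - γ) * Complex.I * (((Real.exp (-x.1^2) : ℝ) : ℂ) * ((x.2 * Real.exp (-x.2^2) : ℝ) : ℂ)) + δ * (((x.1^2 * Real.exp (-x.1^2) : ℝ) : ℂ) * ((Real.exp (-x.2^2) : ℝ) : ℂ))) ∂((volume : Measure ℝ).prod volume)) = (∫ x : ℝ × ℝ, (α * (((Real.exp (-x.1^2) : ℝ) : ℂ) * ((Real.exp (-x.2^2) : ℝ) : ℂ)) + (β + γ)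 * (((x.1 * Real.exp (-x.1^2) : ℝ) : ℂ) * ((Real.exp (-x.2^2) : ℝ) : ℂ)) + (β - γ) * Complex.I * (((Real.exp (-x.1^2) : ℝ) : ℂ) * ((x.2 * Real.exp (-x.2^2) : ℝ) : ℂ))) ∂((volume : Measure ℝ).prod volume)) + (∫ x : ℝ × ℝ, (δ * (((x.1^2 * Real.exp (-x.1^2) : ℝ) : ℂ) * ((Real.exp (-x.2^2) : ℝ) : ℂ))) ∂((volume : Measure ℝ).prod volume)) := integral_add h123 h4
  have e3 : (∫ x : ℝ × ℝ, (α * (((Real.exp (-x.1^2) : ℝ) : ℂ) * ((Real.exp (-x.2^2) : ℝ) : ℂ)) + (β + γ) * (((x.1 * Real.exp (-x.1^2) : ℝ) : ℂ) * ((Real.exp (-x.2^2) : ℝ) : ℂ)) + (β - γ) * Complex.I * (((Real.exp (-x.1^2) : ℝ) : ℂ) * ((x.2 * Real.exp (-x.2^2) : ℝ) : ℂ))) ∂((volume : Measure ℝ).prod volume)) = (∫ x : ℝ × ℝ, (α * (((Real.exp (-x.1^2) : ℝ) : ℂ) * ((Real.exp (-x.2^2) : ℝ) : ℂ)) + (β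 + γ) * (((x.1 * Real.exp (-x.1^2) : ℝ) : ℂ) * ((Real.exp (-x.2^2) : ℝ) : ℂ))) ∂((volume : Measure ℝ).prod volume)) + (∫ x : ℝ × ℝ, ((β - γ) * Complex.I * (((Real.exp (-x.1^2) : ℝ) : ℂ) * ((x.2 * Real.exp (-x.2^2) : ℝ) : ℂ))) ∂((volume : Measure ℝ).prod volume)) := integral_add h12 h3
  have e2 : (∫ x : ℝ × ℝ, (α * (((Real.exp (-x.1^2) : ℝ) : ℂ) * ((Real.exp (-x.2^2) : ℝ) : ℂ)) + (β + γ) * (((x.1 * Real.exp (-x.1^2) : ℝ) : ℂ) * ((Real.exp (-x.2^2) : ℝ) : ℂ))) ∂((volume : Measure ℝ).prod volume)) = (∫ x : ℝ × ℝ, (α * (((Real.exp (-x.1^2) : ℝ) : ℂ) * ((Real.exp (-x.2^2) : ℝ) : ℂ))) ∂((volume : Measure ℝ).prod volume)) + (∫ x : ℝ × ℝ, ((β + γ) * (((x.1 * Real.exp (-x.1^2) : ℝ) : ℂ) * ((Real.exp (-x.2^2) : ℝ) : ℂ))) ∂((volume : Measure ℝ).prod volume)) := integral_add h1 h2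
  rw [e5, e4, e3, e2]
  rw [integral_const_mul, integral_const_mul, integral_const_mul, integral_const_mul,
    integral_const_mul]
  have p0 : (∫ x : ℝ × ℝ, ((Real.exp (-x.1^2) : ℝ) : ℂ) * ((Real.exp (-x.2^2) : ℝ) : ℂ) ∂((volume : Measure ℝ).prod volume)) = (∫ x : ℝ, ((Real.exp (-x^2) : ℝ) : ℂ)) * (∫ x : ℝ, ((Real.exp (-x^2) : ℝ) : ℂ)) := integral_prod_mul (fun x : ℝ => ((Real.exp (-x^2) : ℝ) : ℂ)) (fun x : ℝ => ((Real.exp (-x^2) : ℝ) : ℂ))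
  have p1 : (∫ x : ℝ × ℝ, ((x.1 * Real.exp (-x.1^2) : ℝ) : ℂ) * ((Real.exp (-x.2^2) : ℝ) : ℂ) ∂((volume : Measure ℝ).prod volume)) = (∫ x : ℝ, ((x * Real.exp (-x^2) : ℝ) : ℂ)) * (∫ x : ℝ, ((Real.exp (-x^2) : ℝ) : ℂ)) := integral_prod_mul (fun x : ℝ => ((x * Real.exp (-x^2) : ℝ) : ℂ)) (fun x : ℝ => ((Real.exp (-x^2) : ℝ) : ℂ))
  have p2 : (∫ x : ℝ × ℝ, ((Real.exp (-x.1^2) : ℝ) : ℂ) * ((x.2 * Real.exp (-x.2^2) : ℝ) : ℂ) ∂((volume : Measure ℝ).prod volume)) = (∫ x : ℝ, ((Real.exp (-x^2) : ℝ) : ℂ)) * (∫ x : ℝ, ((x * Real.exp (-x^2) : ℝ) : ℂ)) := integral_prod_mul (fun x : ℝ => ((Real.exp (-x^2) : ℝ) : ℂ)) (fun x : ℝ => ((x * Real.exp (-x^2) : ℝ) : ℂ))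
  have p3 : (∫ x : ℝ × ℝ, ((x.1^2 * Real.exp (-x.1^2) : ℝ) : ℂ) * ((Real.exp (-x.2^2) : ℝ) : ℂ) ∂((volume : Measure ℝ).prod volume)) = (∫ x : ℝ, ((x^2 * Real.exp (-x^2) : ℝ) : ℂ)) * (∫ x : ℝ, ((Real.exp (-x^2) : ℝ) : ℂ)) := integral_prod_mul (fun x : ℝ => ((x^2 * Real.exp (-x^2) : ℝ) : ℂ)) (fun x : ℝ => ((Real.exp (-x^2) : ℝ) : ℂ))
  have p4 : (∫ x : ℝ × ℝ, ((Real.exp (-x.1^2) : ℝ) : ℂ) * ((x.2^2 * Real.exp (-x.2^2) : ℝ) : ℂ) ∂((volume : Measure ℝ).prod volume)) = (∫ x : ℝ, ((Real.exp (-x^2) : ℝ) : ℂ)) * (∫ x : ℝ, ((x^2 * Real.exp (-x^2) : ℝ) : ℂ)) := integral_prod_mul (fun x : ℝ => ((Real.exp (-x^2) : ℝ) : ℂ)) (fun x : ℝ => ((x^2 * Real.exp (-x^2) : ℝ) : ℂ))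
  rw [p0, p1, p2, p3, p4]
  have q0 : (∫ x : ℝ, ((Real.exp (-x^2) : ℝ) : ℂ)) = Complex.ofReal (∫ x : ℝ, Real.exp (-x^2)) :=
    integral_ofReal (f := fun x : ℝ => Real.exp (-x^2))
  have q1 : (∫ x : ℝ, ((x * Real.exp (-x^2) : ℝ) : ℂ)) = Complex.ofReal (∫ x : ℝ, x * Real.exp (-x^2)) :=
    integral_ofReal (f := fun x : ℝ => x * Real.exp (-x^2))
  have q2 : (∫ x : ℝ, ((x^2 * Real.exp (-x^2) : ℝ) : ℂ)) = Complex.ofReal (∫ x : ℝ, x^2 * Real.exp (-x^2)) :=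
    integral_ofReal (f := fun x : ℝ => x^2 * Real.exp (-x^2))
  rw [q0, q1, q2, rA, rB, rC]
  have h : ((Real.sqrt π : ℝ) : ℂ) * ((Real.sqrt π : ℝ) : ℂ) = ((π : ℝ) : ℂ) := by
    rw [← Complex.ofReal_mul, Real.mul_self_sqrt Real.pi_pos.le]
  push_cast at h ⊢
  linear_combination (α + δ) * h

noncomputable def entF (c d : ℂ) (Pp Qp : Prop) [Decidable Pp] [Decidable Qp] : ℂ → ℂ :=
  fun a => (Real.exp (-‖a‖^2) : ℂ) * (if Pp then c - a else 1) *
    (if Qp then (starRingEnd ℂ) (d - a) else 1)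

lemma entF_eq_polyGauss (c d : ℂ) (Pp Qp : Prop) [Decidable Pp] [Decidable Qp] :
    entF c d Pp Qp = polyGauss
      (if Pp then (if Qp then c * (starRingEnd ℂ) d else c) else (if Qp then (starRingEnd ℂ) d else 1))
      (if Pp then (if Qp then -(starRingEnd ℂ) d else -1) else 0)
      (if Qp then (if Pp then -c else -1) else 0)
      (if Pp ∧ Qp then 1 else 0) := by
  funext a
  by_cases hP : Pp <;> by_cases hQ : Qp <;>
    simp only [entF, polyGauss, hP, hQ, if_true, if_false, and_self, true_and, and_true,
      if_pos, if_neg, not_false_iff, map_sub] <;> ring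

lemma entF_integrable (c d : ℂ) (Pp Qp : Prop) [Decidable Pp] [Decidable Qp] :
    Integrable (entF c d Pp Qp) := by
  rw [entF_eq_polyGauss]; exact intPolyGauss _ _ _ _

lemma entF_integral (c d : ℂ) (Pp Qp : Prop) [Decidable Pp] [Decidable Qp] :
    ∫ a : ℂ, entF c d Pp Qp a = (π : ℂ) *
      (if Pp then (if Qp then c * (starRingEnd ℂ) d + 1 else c)
       else (if Qp then (starRingEnd ℂ) d else 1)) := by
  rw [entF_eq_polyGauss, valPolyGauss]
  by_cases hP : Pp <;> by_cases hQ : Qp <;>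
    simp [hP, hQ]

lemma card_fixing (N : ℕ) (t : Finset (Fin N)) :
    (Finset.univ.filter (fun σ : Equiv.Perm (Fin N) => ∀ j ∈ t, σ j = j)).card
      = Nat.factorial (N - t.card) := by
  rw [← Fintype.card_subtype]
  have e1 := Equiv.Perm.subtypeEquivSubtypePerm (fun j : Fin N => j ∉ t)
  have e2 : { f : Equiv.Perm (Fin N) // ∀ a, ¬(a ∉ t) → f a = a }
      ≃ { σ : Equiv.Perm (Fin N) // ∀ j ∈ t, σ j = j } :=
    Equiv.subtypeEquivRight (fun σ => by
      constructor
      · intro h j hj; exact h j (by simpa using hj)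
      · intro h a ha; exact h a (by simpa using ha))
  rw [Fintype.card_congr (e2.symm.trans (e1.symm))]
  rw [Fintype.card_perm]
  congr 1
  rw [Fintype.card_subtype_compl, Fintype.card_fin, Fintype.card_coe]

lemma perm_fix_sum (N : ℕ) (x : ℂ) :
    ∑ σ : Equiv.Perm (Fin N), ∏ j : Fin N, (x * (if σ j = j then 1 else 0) + 1)
      = (Nat.factorial N : ℂ) * ∑ k ∈ Finset.range (N+1), x^k / (Nat.factorial k : ℂ) := by
  have step1 : ∀ σ : Equiv.Perm (Fin N),
      ∏ j : Fin N, (x * (if σ j = j then 1 else 0) + 1)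
        = ∑ t ∈ (Finset.univ : Finset (Fin N)).powerset,
            x ^ t.card * (if ∀ j ∈ t, σ j = j then 1 else 0) := by
    intro σ
    rw [Finset.prod_add]
    refine Finset.sum_congr rfl (fun t _ => ?_)
    rw [Finset.prod_const_one, mul_one, Finset.prod_mul_distrib, Finset.prod_const,
      Finset.prod_boole]
    simp
  simp_rw [step1]
  rw [Finset.sum_comm]
  have step2 : ∀ t ∈ (Finset.univ : Finset (Fin N)).powerset,
      (∑ σ : Equiv.Perm (Fin N), x ^ t.card * (if ∀ j ∈ t, σ j = j then 1 else 0))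
        = x ^ t.card * (Nat.factorial (N - t.card) : ℂ) := by
    intro t _
    rw [← Finset.mul_sum, Finset.sum_boole, card_fixing]
  rw [Finset.sum_congr rfl step2]
  rw [Finset.sum_powerset]
  have step3 : ∀ k ∈ Finset.range ((Finset.univ : Finset (Fin N)).card + 1),
      (∑ t ∈ Finset.powersetCard k (Finset.univ : Finset (Fin N)),
        x ^ t.card * (Nat.factorial (N - t.card) : ℂ))
      = (Nat.factorial N : ℂ) * (x ^ k / (Nat.factorial k : ℂ)) := by
    intro k hk
    rw [Finset.mem_range, Finset.card_univ, Fintype.card_fin] at hk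
    have hkN : k ≤ N := Nat.lt_succ_iff.mp hk
    have hcard : ∀ t ∈ Finset.powersetCard k (Finset.univ : Finset (Fin N)), 
        x ^ t.card * (Nat.factorial (N - t.card) : ℂ) = x ^ k * (Nat.factorial (N - k) : ℂ) := by
      intro t ht
      rw [(Finset.mem_powersetCard.mp ht).2]
    rw [Finset.sum_congr rfl hcard, Finset.sum_const, Finset.card_powersetCard,
      Finset.card_univ, Fintype.card_fin, nsmul_eq_mul]
    have hfact : (N.choose k) * (Nat.factorial k) * (Nat.factorial (N - k)) = Nat.factorial N :=
      Nat.choose_mul_factorial_mul_factorial hkN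
    have hk0 : (Nat.factorial k : ℂ) ≠ 0 := Nat.cast_ne_zero.mpr (Nat.factorial_ne_zero k)
    field_simp
    have := congrArg (fun n : ℕ => (n : ℂ)) hfact
    push_cast at this ⊢
    linear_combination x ^ k * this
  rw [Finset.sum_congr rfl step3, ← Finset.mul_sum]
  congr 1
  rw [Finset.card_univ, Fintype.card_fin]

lemma integrand_expand (N : ℕ) (z w : ℂ) (J : Fin N → Fin N → ℂ) :
    Complex.exp (-((Matrix.of J * (Matrix.of J)ᴴ).trace)) *
        (z • (1 : Matrix (Fin N) (Fin N) ℂ) - Matrix.of J).det *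
        ((starRingEnd ℂ) w • (1 : Matrix (Fin N) (Fin N) ℂ) - (Matrix.of J)ᴴ).det
      = ∑ σ : Equiv.Perm (Fin N), ∑ τ : Equiv.Perm (Fin N),
          ((Equiv.Perm.sign σ : ℤ) : ℂ) * ((Equiv.Perm.sign τ : ℤ) : ℂ) *
            ∏ i : Fin N, ∏ j : Fin N,
              entF (if i = j then z else 0) (if i = j then w else 0) (σ j = i) (τ j = i)
                (J i j) := by
  -- exponential factor
  have hexp : Complex.exp (-((Matrix.of J * (Matrix.of J)ᴴ).trace))
      = ∏ i : Fin N, ∏ j : Fin N, ((Real.exp (-‖J i j‖^2) : ℝ) : ℂ) := by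
    have htr : (Matrix.of J * (Matrix.of J)ᴴ).trace
        = ∑ i : Fin N, ∑ j : Fin N, ((‖J i j‖^2 : ℝ) : ℂ) := by
      simp only [Matrix.trace, Matrix.diag, Matrix.mul_apply, Matrix.conjTranspose_apply,
        Matrix.of_apply]
      refine Finset.sum_congr rfl (fun i _ => Finset.sum_congr rfl (fun j _ => ?_))
      rw [show star (J i j) = (starRingEnd ℂ) (J i j) from rfl, Complex.mul_conj,
        Complex.normSq_eq_norm_sq]
    rw [htr, ← Finset.sum_neg_distrib, Complex.exp_sum]
    refine Finset.prod_congr rfl (fun i _ => ?_)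
    rw [← Finset.sum_neg_distrib, Complex.exp_sum]
    refine Finset.prod_congr rfl (fun j _ => ?_)
    rw [← Complex.ofReal_neg, ← Complex.ofReal_exp]
  -- first determinant
  have hdet1 : (z • (1 : Matrix (Fin N) (Fin N) ℂ) - Matrix.of J).det
      = ∑ σ : Equiv.Perm (Fin N), ((Equiv.Perm.sign σ : ℤ) : ℂ) *
          ∏ j : Fin N, ((if σ j = j then z else 0) - J (σ j) j) := by
    rw [Matrix.det_apply']
    refine Finset.sum_congr rfl (fun σ _ => ?_)
    congr 1
    refine Finset.prod_congr rfl (fun j _ => ?_)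
    simp [Matrix.sub_apply, Matrix.smul_apply, Matrix.one_apply, Matrix.of_apply, smul_eq_mul,
      mul_ite, mul_one, mul_zero]
  -- second determinant
  have hmat : (starRingEnd ℂ) w • (1 : Matrix (Fin N) (Fin N) ℂ) - (Matrix.of J)ᴴ
      = (w • (1 : Matrix (Fin N) (Fin N) ℂ) - Matrix.of J)ᴴ := by
    rw [Matrix.conjTranspose_sub, Matrix.conjTranspose_smul, Matrix.conjTranspose_one]
    rfl
  have hdet2 : ((starRingEnd ℂ) w • (1 : Matrix (Fin N) (Fin N) ℂ) - (Matrix.of J)ᴴ).det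
      = ∑ τ : Equiv.Perm (Fin N), ((Equiv.Perm.sign τ : ℤ) : ℂ) *
          ∏ j : Fin N, (starRingEnd ℂ) ((if τ j = j then w else 0) - J (τ j) j) := by
    rw [hmat, Matrix.det_conjTranspose, Matrix.det_apply']
    rw [show (star : ℂ → ℂ) = (starRingEnd ℂ) from rfl]
    rw [map_sum]
    refine Finset.sum_congr rfl (fun τ _ => ?_)
    rw [_root_.map_mul, map_prod]
    congr 1
    · simp
    refine Finset.prod_congr rfl (fun j _ => ?_)
    congr 1
    simp [Matrix.sub_apply, Matrix.smul_apply, Matrix.one_apply, Matrix.of_apply, smul_eq_mul,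
      mul_ite, mul_one, mul_zero]
  rw [hexp, hdet1, Finset.mul_sum, Finset.sum_mul]
  refine Finset.sum_congr rfl (fun σ _ => ?_)
  rw [hdet2, Finset.mul_sum]
  refine Finset.sum_congr rfl (fun τ _ => ?_)
  -- now fixed σ, τ
  have hA : (∏ j : Fin N, ((if σ j = j then z else 0) - J (σ j) j))
      = ∏ i : Fin N, ∏ j : Fin N,
          (if σ j = i then ((if i = j then z else 0) - J i j) else 1) := by
    rw [Finset.prod_comm]
    refine Finset.prod_congr rfl (fun j _ => ?_)
    rw [Finset.prod_ite_eq, if_pos (Finset.mem_univ _)]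
  have hB : (∏ j : Fin N, (starRingEnd ℂ) ((if τ j = j then w else 0) - J (τ j) j))
      = ∏ i : Fin N, ∏ j : Fin N,
          (if τ j = i then (starRingEnd ℂ) ((if i = j then w else 0) - J i j) else 1) := by
    rw [Finset.prod_comm]
    refine Finset.prod_congr rfl (fun j _ => ?_)
    rw [Finset.prod_ite_eq, if_pos (Finset.mem_univ _)]
  have hprod : (∏ i : Fin N, ∏ j : Fin N, ((Real.exp (-‖J i j‖^2) : ℝ) : ℂ))
      * (∏ i : Fin N, ∏ j : Fin N,
          (if σ j = i then ((if i = j then z else 0) - J i j) else 1))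
      * (∏ i : Fin N, ∏ j : Fin N,
          (if τ j = i then (starRingEnd ℂ) ((if i = j then w else 0) - J i j) else 1))
      = ∏ i : Fin N, ∏ j : Fin N,
          entF (if i = j then z else 0) (if i = j then w else 0) (σ j = i) (τ j = i) (J i j) := by
    rw [← Finset.prod_mul_distrib, ← Finset.prod_mul_distrib]
    refine Finset.prod_congr rfl (fun i _ => ?_)
    rw [← Finset.prod_mul_distrib, ← Finset.prod_mul_distrib]
    exact Finset.prod_congr rfl (fun j _ => rfl)
  calc (∏ i : Fin N, ∏ j : Fin N, ((Real.exp (-‖J i j‖^2) : ℝ) : ℂ))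
        * (((Equiv.Perm.sign σ : ℤ) : ℂ) * ∏ j : Fin N, ((if σ j = j then z else 0) - J (σ j) j))
        * (((Equiv.Perm.sign τ : ℤ) : ℂ) *
            ∏ j : Fin N, (starRingEnd ℂ) ((if τ j = j then w else 0) - J (τ j) j))
      = ((Equiv.Perm.sign σ : ℤ) : ℂ) * ((Equiv.Perm.sign τ : ℤ) : ℂ) *
          ((∏ i : Fin N, ∏ j : Fin N, ((Real.exp (-‖J i j‖^2) : ℝ) : ℂ))
          * (∏ j : Fin N, ((if σ j = j then z else 0) - J (σ j) j))
          * (∏ j : Fin N, (starRingEnd ℂ) ((if τ j = j then w else 0) - J (τ j) j))) := by ring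
    _ = _ := by rw [hA, hB, hprod]

noncomputable def hval (N : ℕ) (z w : ℂ) (σ τ : Equiv.Perm (Fin N)) (i j : Fin N) : ℂ :=
  if σ j = i then
    (if τ j = i then (if i = j then z else 0) * (starRingEnd ℂ) (if i = j then w else 0) + 1
     else (if i = j then z else 0))
  else (if τ j = i then (starRingEnd ℂ) (if i = j then w else 0) else 1)

lemma col_eq (N : ℕ) (z w : ℂ) (σ τ : Equiv.Perm (Fin N)) (j : Fin N) :
    (∏ i : Fin N, hval N z w σ τ i j)
      = if σ j = τ j then ((z * (starRingEnd ℂ) w) * (if σ j = j then 1 else 0) + 1)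
        else (if σ j = j then z else 0) * (if τ j = j then (starRingEnd ℂ) w else 0) := by
  by_cases h : σ j = τ j
  · rw [if_pos h]
    have key : ∀ i : Fin N, hval N z w σ τ i j =
        if σ j = i then ((z * (starRingEnd ℂ) w) * (if σ j = j then 1 else 0) + 1) else 1 := by
      intro i
      by_cases h1 : σ j = i
      · have h2 : τ j = i := h ▸ h1
        rw [hval, if_pos h1, if_pos h2, if_pos h1]
        subst h1
        by_cases h3 : σ j = j
        · rw [if_pos h3]
          have : (σ j : Fin N) = j := h3
          simp [this, h3]
        · rw [if_neg h3]
          have : ¬ (σ j : Fin N) = j := h3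
          simp [this]
      · have h2 : ¬ τ j = i := fun hc => h1 (h ▸ hc)
        rw [hval, if_neg h1, if_neg h2, if_neg h1]
    rw [Finset.prod_congr rfl (fun i _ => key i), Finset.prod_ite_eq, if_pos (Finset.mem_univ _)]
  · rw [if_neg h]
    have key : ∀ i : Fin N, hval N z w σ τ i j =
        (if σ j = i then (if i = j then z else 0) else 1) *
        (if τ j = i then (starRingEnd ℂ) (if i = j then w else 0) else 1) := by
      intro i
      by_cases h1 : σ j = i <;> by_cases h2 : τ j = i
      · exact absurd (h1.trans h2.symm) h
      all_goals simp [hval, h1, h2]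
    rw [Finset.prod_congr rfl (fun i _ => key i), Finset.prod_mul_distrib,
      Finset.prod_ite_eq, Finset.prod_ite_eq, if_pos (Finset.mem_univ _),
      if_pos (Finset.mem_univ _)]
    congr 1
    rw [apply_ite (starRingEnd ℂ), map_zero]

lemma sum_eval (N : ℕ) (z w : ℂ) :
    (∑ σ : Equiv.Perm (Fin N), ∑ τ : Equiv.Perm (Fin N),
      ((Equiv.Perm.sign σ : ℤ) : ℂ) * ((Equiv.Perm.sign τ : ℤ) : ℂ) *
        ∏ i : Fin N, ∏ j : Fin N, hval N z w σ τ i j)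
      = ∑ σ : Equiv.Perm (Fin N), ∏ j : Fin N,
          ((z * (starRingEnd ℂ) w) * (if σ j = j then 1 else 0) + 1) := by
  refine Finset.sum_congr rfl (fun σ _ => ?_)
  rw [Finset.sum_eq_single_of_mem σ (Finset.mem_univ σ)]
  · have hsgn : ((Equiv.Perm.sign σ : ℤ) : ℂ) * ((Equiv.Perm.sign σ : ℤ) : ℂ) = 1 := by
      rw [← Int.cast_mul, ← Units.val_mul, Int.units_mul_self, Units.val_one, Int.cast_one]
    rw [hsgn, one_mul, Finset.prod_comm]
    refine Finset.prod_congr rfl (fun j _ => ?_)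
    rw [col_eq, if_pos rfl]
  · intro τ _ hτ
    have hex : ∃ j : Fin N, σ j ≠ τ j := by
      by_contra hc
      push_neg at hc
      exact hτ ((Equiv.ext (fun j => (hc j))).symm)
    obtain ⟨j, hj⟩ := hex
    rw [Finset.prod_comm]
    rw [Finset.prod_eq_zero (Finset.mem_univ j), mul_zero]
    rw [col_eq, if_neg hj]
    by_cases h3 : σ j = j
    · have h4 : ¬ τ j = j := fun hc => hj (h3.trans hc.symm)
      rw [if_neg h4, mul_zero]
    · rw [if_neg h3, zero_mul]
end GinibreAux

open Complex in
/-- Class A (complex Ginibre): the Gaussian average of one pair of conjugate characteristic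
polynomials equals `π^{N²} · N! · E_N(z w̄)`. -/
theorem statement0 (N : ℕ) (hN : 1 ≤ N) (z w : ℂ) :
    (∫ J : Fin N → Fin N → ℂ,
      Complex.exp (-((Matrix.of J * (Matrix.of J)ᴴ).trace)) *
        (z • (1 : Matrix (Fin N) (Fin N) ℂ) - Matrix.of J).det *
        ((starRingEnd ℂ) w • (1 : Matrix (Fin N) (Fin N) ℂ) - (Matrix.of J)ᴴ).det)
      = (Real.pi : ℂ) ^ (N ^ 2) * (Nat.factorial N : ℂ) *
          truncExp N (z * (starRingEnd ℂ) w) := by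
  have hint : ∀ σ τ : Equiv.Perm (Fin N), Integrable (fun J : Fin N → Fin N → ℂ =>
      ∏ i : Fin N, ∏ j : Fin N,
        entF (if i = j then z else 0) (if i = j then w else 0) (σ j = i) (τ j = i) (J i j)) := by
    intro σ τ
    exact Integrable.fintype_prod
      (f := fun i (r : Fin N → ℂ) => ∏ j : Fin N,
        entF (if i = j then z else 0) (if i = j then w else 0) (σ j = i) (τ j = i) (r j))
      (fun i => Integrable.fintype_prod
        (f := fun j (a : ℂ) =>
          entF (if i = j then z else 0) (if i = j then w else 0) (σ j = i) (τ j = i) a)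
        (fun j => entF_integrable _ _ _ _))
  have hval_int : ∀ σ τ : Equiv.Perm (Fin N), (∫ J : Fin N → Fin N → ℂ,
      ∏ i : Fin N, ∏ j : Fin N,
        entF (if i = j then z else 0) (if i = j then w else 0) (σ j = i) (τ j = i) (J i j))
      = ∏ i : Fin N, ∏ j : Fin N, (Real.pi : ℂ) * hval N z w σ τ i j := by
    intro σ τ
    rw [MeasureTheory.integral_fintype_prod_volume_eq_prod
      (f := fun i (r : Fin N → ℂ) => ∏ j : Fin N,
        entF (if i = j then z else 0) (if i = j then w else 0) (σ j = i) (τ j = i) (r j))]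
    refine Finset.prod_congr rfl (fun i _ => ?_)
    rw [MeasureTheory.integral_fintype_prod_volume_eq_prod
      (f := fun j (a : ℂ) =>
        entF (if i = j then z else 0) (if i = j then w else 0) (σ j = i) (τ j = i) a)]
    refine Finset.prod_congr rfl (fun j _ => ?_)
    rw [entF_integral]
    rfl
  calc (∫ J : Fin N → Fin N → ℂ,
      Complex.exp (-((Matrix.of J * (Matrix.of J)ᴴ).trace)) *
        (z • (1 : Matrix (Fin N) (Fin N) ℂ) - Matrix.of J).det *
        ((starRingEnd ℂ) w • (1 : Matrix (Fin N) (Fin N) ℂ) - (Matrix.of J)ᴴ).det)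
      = ∫ J : Fin N → Fin N → ℂ, ∑ σ : Equiv.Perm (Fin N), ∑ τ : Equiv.Perm (Fin N),
          ((Equiv.Perm.sign σ : ℤ) : ℂ) * ((Equiv.Perm.sign τ : ℤ) : ℂ) *
            ∏ i : Fin N, ∏ j : Fin N,
              entF (if i = j then z else 0) (if i = j then w else 0) (σ j = i) (τ j = i)
                (J i j) := by
        congr 1
        funext J
        exact integrand_expand N z w J
    _ = ∑ σ : Equiv.Perm (Fin N), ∑ τ : Equiv.Perm (Fin N),
          ((Equiv.Perm.sign σ : ℤ) : ℂ) * ((Equiv.Perm.sign τ : ℤ) : ℂ) *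
            ∏ i : Fin N, ∏ j : Fin N, ((Real.pi : ℂ) * hval N z w σ τ i j) := by
        rw [integral_finset_sum Finset.univ (fun σ _ =>
          integrable_finset_sum Finset.univ (fun τ _ => (hint σ τ).const_mul _))]
        refine Finset.sum_congr rfl (fun σ _ => ?_)
        rw [integral_finset_sum Finset.univ (fun τ _ => (hint σ τ).const_mul _)]
        refine Finset.sum_congr rfl (fun τ _ => ?_)
        rw [integral_const_mul, hval_int σ τ]
    _ = (Real.pi : ℂ) ^ (N ^ 2) * ∑ σ : Equiv.Perm (Fin N), ∑ τ : Equiv.Perm (Fin N),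
          ((Equiv.Perm.sign σ : ℤ) : ℂ) * ((Equiv.Perm.sign τ : ℤ) : ℂ) *
            ∏ i : Fin N, ∏ j : Fin N, hval N z w σ τ i j := by
        have hpp : ∀ σ τ : Equiv.Perm (Fin N),
            (∏ i : Fin N, ∏ j : Fin N, ((Real.pi : ℂ) * hval N z w σ τ i j))
            = (Real.pi : ℂ) ^ (N ^ 2) * ∏ i : Fin N, ∏ j : Fin N, hval N z w σ τ i j := by
          intro σ τ
          rw [show (∏ i : Fin N, ∏ j : Fin N, ((Real.pi : ℂ) * hval N z w σ τ i j))
              = (∏ _i : Fin N, ∏ _j : Fin N, (Real.pi : ℂ)) *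
                ∏ i : Fin N, ∏ j : Fin N, hval N z w σ τ i j from by
            rw [← Finset.prod_mul_distrib]
            exact Finset.prod_congr rfl (fun i _ => by rw [← Finset.prod_mul_distrib])]
          congr 1
          rw [Finset.prod_const, Finset.prod_const, Finset.card_univ, Fintype.card_fin,
            ← pow_mul, ← Nat.pow_two]
        simp_rw [hpp]
        rw [Finset.mul_sum]
        refine Finset.sum_congr rfl (fun σ _ => ?_)
        rw [Finset.mul_sum]
        exact Finset.sum_congr rfl (fun τ _ => by ring)
    _ = (Real.pi : ℂ) ^ (N ^ 2) * (Nat.factorial N : ℂ) *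
          truncExp N (z * (starRingEnd ℂ) w) := by
        rw [sum_eval, perm_fix_sum, truncExp, mul_assoc]
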